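/- Let G = δ_{B̄(0,α)} be the indicator function of the closed ball of radius α > 0 in a Hilbert space, and let (x*, q*) ∈ graph ∂G with q* ≠ 0. Then x* is the unique point of (∂G)⁻¹(q*), ‖x*‖ = α, q* = βx* for some β > 0, and for γ := ‖q*‖/(2α), the subdifferential ∂G is (I, γI)-strongly submonotone at (x*, q*) on the whole domain: ⟨q - q*, x - x*⟩ ≥ γ‖x - x*‖² for all x with ‖x‖ ≤ α and all q ∈ ∂G(x) = N_{B̄(0,α)}(x). -/

import Mathlib

open scoped RealInnerProductSpace

/-- Lemma 5.1: the subdifferential (normal cone) of the indicator of the closed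
ball `B̄(0,α)` is `(I, γI)`-strongly submonotone at `(x*, q*)` with
`γ = ‖q*‖/(2α)` whenever `q* ≠ 0`. -/
theorem ball_indicator_strongly_submonotone
    {X : Type*} [NormedAddCommGroup X] [InnerProductSpace ℝ X]
    (α : ℝ) (hα : 0 < α)
    (NC : X → Set X)
    (hNC : ∀ x, NC x = {q | ‖x‖ ≤ α ∧ ∀ y : X, ‖y‖ ≤ α → ⟪q, y - x⟫ ≤ 0})
    (xs qs : X) (hqs : qs ∈ NC xs) (hqs0 : qs ≠ 0) :
    (∀ x, qs ∈ NC x → x = xs)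
    ∧ ‖xs‖ = α
    ∧ (∃ β : ℝ, 0 < β ∧ qs = β • xs)
    ∧ (∀ x : X, ‖x‖ ≤ α → ∀ q ∈ NC x,
        ⟪q - qs, x - xs⟫ ≥ (‖qs‖ / (2 * α)) * ‖x - xs‖^2) := by
  rw [hNC] at hqs
  obtain ⟨hxs, hq⟩ := hqs
  have hq0 : 0 < ‖qs‖ := norm_pos_iff.mpr hqs0
  have hα0 : (α : ℝ) ≠ 0 := hα.ne'
  -- key lemma: any x with qs in its normal cone has norm α and qs = (‖qs‖/α) • x
  have key : ∀ x : X, ‖x‖ ≤ α → (∀ y : X, ‖y‖ ≤ α → ⟪qs, y - x⟫ ≤ 0) →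
      ‖x‖ = α ∧ qs = (‖qs‖ / α) • x := by
    intro x hx h
    have hy : ‖(α / ‖qs‖) • qs‖ ≤ α := by
      rw [norm_smul, Real.norm_eq_abs, abs_of_pos (div_pos hα hq0)]
      field_simp; exact le_rfl
    have h1 := h _ hy
    rw [inner_sub_right, real_inner_smul_right, real_inner_self_eq_norm_sq] at h1
    have h2 : α * ‖qs‖ ≤ ⟪qs, x⟫ := by
      have he : α / ‖qs‖ * ‖qs‖ ^ 2 = α * ‖qs‖ := by field_simp
      nlinarith [h1]
    have h3 : ⟪qs, x⟫ ≤ ‖qs‖ * ‖x‖ := real_inner_le_norm qs x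
    have hxα : ‖x‖ = α := le_antisymm hx (by nlinarith)
    have h4 : ⟪qs, x⟫ = ‖qs‖ * ‖x‖ := by nlinarith
    have h5 := inner_eq_norm_mul_iff_real.mp h4
    rw [hxα] at h5
    refine ⟨hxα, ?_⟩
    calc qs = α⁻¹ • (α • qs) := by rw [smul_smul, inv_mul_cancel₀ hα0, one_smul]
      _ = α⁻¹ • (‖qs‖ • x) := by rw [h5]
      _ = (‖qs‖ / α) • x := by rw [smul_smul, div_eq_inv_mul]
  obtain ⟨hxsα, hqsxs⟩ := key xs hxs hq
  have hbne : (‖qs‖ / α : ℝ) ≠ 0 := (div_pos hq0 hα).ne'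
  refine ⟨?_, hxsα, ⟨‖qs‖ / α, div_pos hq0 hα, hqsxs⟩, ?_⟩
  · intro x hx
    rw [hNC] at hx
    obtain ⟨hx1, hx2⟩ := hx
    obtain ⟨hxα, hqx⟩ := key x hx1 hx2
    have : (‖qs‖ / α) • x = (‖qs‖ / α) • xs := by rw [← hqx, ← hqsxs]
    exact smul_right_injective X hbne this
  · intro x hx q hqmem
    rw [hNC] at hqmem
    obtain ⟨_, hqp⟩ := hqmem
    have h1 : ⟪q, xs - x⟫ ≤ 0 := hqp xs (le_of_eq hxsα)
    have h1' : 0 ≤ ⟪q, x - xs⟫ := by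
      have : ⟪q, x - xs⟫ = -⟪q, xs - x⟫ := by
        rw [← inner_neg_right]; congr 1; abel
      linarith
    have hsplit : ⟪q - qs, x - xs⟫ = ⟪q, x - xs⟫ - ⟪qs, x - xs⟫ := inner_sub_left _ _ _
    have hqsx : ⟪qs, x - xs⟫ = (‖qs‖ / α) * (⟪xs, x⟫ - α ^ 2) := by
      conv_lhs => rw [hqsxs]
      rw [real_inner_smul_left, inner_sub_right, real_inner_self_eq_norm_sq, hxsα]
    have hnorm : ‖x - xs‖ ^ 2 = ‖x‖ ^ 2 - 2 * ⟪x, xs⟫ + α ^ 2 := by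
      rw [@norm_sub_sq_real, hxsα]
    have hcomm : ⟪xs, x⟫ = ⟪x, xs⟫ := real_inner_comm _ _
    have hx2 : ‖x‖ ^ 2 ≤ α ^ 2 := by nlinarith [norm_nonneg x]
    rw [ge_iff_le, hsplit, hqsx, hcomm, hnorm]
    rw [div_mul_eq_mul_div, div_mul_eq_mul_div, div_le_iff₀ (by positivity : (0:ℝ) < 2 * α),
      sub_mul, div_mul_eq_mul_div, mul_comm (2:ℝ) α, mul_div_assoc, mul_div_cancel_left₀ _ hα0]
    nlinarith [mul_nonneg h1' (by positivity : (0:ℝ) ≤ 2 * α), hq0.le]
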